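/- Let f : [0,∞) → ℝ be continuous with |f(x)| ≤ M_f·(1+x²) for some constant M_f and such that lim_{x→∞} f(x)/(1+x²) exists and is finite. Then for all reals λ > 0 and δ > 0: Ω(f; λδ) ≤ 2·(1+λ)·(1+δ²)·Ω(f; δ). -/

import Mathlib

open Filter

/-- First modulus of continuity on `[0,∞)`. -/
noncomputable def omega1 (f : ℝ → ℝ) (δ : ℝ) : ℝ :=
  sSup {y | ∃ h x : ℝ, 0 < h ∧ h ≤ δ ∧ 0 ≤ x ∧ y = |f (x + h) - f x|}

/-- Second modulus of continuity on `[0,∞)`. -/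
noncomputable def omega2 (f : ℝ → ℝ) (δ : ℝ) : ℝ :=
  sSup {y | ∃ h x : ℝ, 0 < h ∧ h ≤ δ ∧ 0 ≤ x ∧ y = |f (x + 2 * h) - 2 * f (x + h) + f x|}

/-- Weighted modulus of continuity `Ω(f;δ)`. -/
noncomputable def OmegaW (f : ℝ → ℝ) (δ : ℝ) : ℝ :=
  sSup {y | ∃ h x : ℝ, 0 < h ∧ h ≤ δ ∧ 0 ≤ x ∧
    y = |f (x + h) - f x| / ((1 + h ^ 2) * (1 + x ^ 2))}

set_option maxHeartbeats 1000000 in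
theorem OmegaW_scaling (f : ℝ → ℝ) (hf : ContinuousOn f (Set.Ici 0))
    (hgrowth : ∃ Mf : ℝ, ∀ x : ℝ, 0 ≤ x → |f x| ≤ Mf * (1 + x ^ 2))
    (hlim : ∃ l : ℝ, Tendsto (fun x : ℝ => f x / (1 + x ^ 2)) atTop (nhds l)) :
    ∀ lam δ : ℝ, 0 < lam → 0 < δ →
      OmegaW f (lam * δ) ≤ 2 * (1 + lam) * (1 + δ ^ 2) * OmegaW f δ := by
  obtain ⟨Mf, hMf⟩ := hgrowth
  intro lam δ hlam hδ
  have hMf0 : 0 ≤ Mf := le_trans (abs_nonneg _) (by simpa using hMf 0 le_rfl)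
  have hbdd : BddAbove {y | ∃ h x : ℝ, 0 < h ∧ h ≤ δ ∧ 0 ≤ x ∧
      y = |f (x + h) - f x| / ((1 + h ^ 2) * (1 + x ^ 2))} := by
    refine ⟨3 * Mf, ?_⟩
    rintro y ⟨h, x, hh, hhd, hx, rfl⟩
    have h1 : (0:ℝ) < (1 + h ^ 2) * (1 + x ^ 2) := by positivity
    rw [div_le_iff₀ h1]
    have hfx : |f x| ≤ Mf * (1 + x ^ 2) := hMf x hx
    have hfxh : |f (x + h)| ≤ Mf * (1 + (x + h) ^ 2) := hMf _ (by linarith)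
    have habs : |f (x + h) - f x| ≤ |f (x + h)| + |f x| := abs_sub _ _
    nlinarith [mul_nonneg hMf0 (sq_nonneg (x - h)), mul_nonneg hMf0 (sq_nonneg (x * h)),
      mul_nonneg hMf0 (sq_nonneg h)]
  have hΩ0 : 0 ≤ OmegaW f δ :=
    Real.sSup_nonneg (by rintro y ⟨h, x, hh, hhd, hx, rfl⟩; positivity)
  apply Real.sSup_le
  · rintro y ⟨h, x, hh, hhl, hx, rfl⟩
    set n : ℕ := ⌈h / δ⌉₊ with hn
    have hn1 : 1 ≤ n := Nat.one_le_ceil_iff.mpr (div_pos hh hδ)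
    have hnpos : (0:ℝ) < n := by exact_mod_cast hn1
    set h' : ℝ := h / n with hh'
    have hh'pos : 0 < h' := div_pos hh hnpos
    have hnh' : (n:ℝ) * h' = h := by rw [hh']; field_simp [hnpos.ne']
    have hceil : h / δ ≤ (n:ℝ) := Nat.le_ceil _
    have hh'δ : h' ≤ δ := by
      rw [hh', div_le_iff₀ hnpos]
      rw [div_le_iff₀ hδ] at hceil
      linarith
    have hhld : h / δ ≤ lam := by rw [div_le_iff₀ hδ]; linarith
    have hnlam : (n:ℝ) ≤ 1 + lam := by
      have := Nat.ceil_lt_add_one (le_of_lt (div_pos hh hδ))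
      rw [← hn] at this
      linarith
    have htel : f (x + h) - f x =
        ∑ k ∈ Finset.range n, (f (x + (k + 1 : ℕ) * h') - f (x + (k : ℕ) * h')) := by
      rw [Finset.sum_range_sub (fun k : ℕ => f (x + (k : ℕ) * h'))]
      simp [hnh']
    have hterm : ∀ k ∈ Finset.range n,
        |f (x + (k + 1 : ℕ) * h') - f (x + (k : ℕ) * h')| ≤
          OmegaW f δ * (2 * (1 + δ ^ 2) * (1 + h ^ 2) * (1 + x ^ 2)) := by
      intro k hk
      have hxk : 0 ≤ x + (k : ℝ) * h' := by positivity
      have hmem : |f ((x + (k : ℝ) * h') + h') - f (x + (k : ℝ) * h')| /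
          ((1 + h' ^ 2) * (1 + (x + (k : ℝ) * h') ^ 2)) ≤ OmegaW f δ :=
        le_csSup hbdd ⟨h', x + (k : ℝ) * h', hh'pos, hh'δ, hxk, rfl⟩
      have hd : (0:ℝ) < (1 + h' ^ 2) * (1 + (x + (k : ℝ) * h') ^ 2) := by positivity
      rw [div_le_iff₀ hd] at hmem
      have heq : x + ((k : ℕ) + 1 : ℕ) * h' = (x + (k : ℝ) * h') + h' := by push_cast; ring
      rw [heq]
      refine hmem.trans ?_
      have hkn : (k : ℝ) ≤ n := by exact_mod_cast (Finset.mem_range.mp hk).le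
      have hk' : (k : ℝ) * h' ≤ h := by nlinarith
      have hb : (1 + h' ^ 2) * (1 + (x + (k : ℝ) * h') ^ 2) ≤
          2 * (1 + δ ^ 2) * (1 + h ^ 2) * (1 + x ^ 2) := by
        have hX2 : (x + (k : ℝ) * h') ^ 2 ≤ (x + h) ^ 2 := by nlinarith
        have h'2 : h' ^ 2 ≤ δ ^ 2 := by nlinarith
        calc (1 + h' ^ 2) * (1 + (x + (k : ℝ) * h') ^ 2)
            ≤ (1 + δ ^ 2) * (1 + (x + h) ^ 2) := by
              apply mul_le_mul (by linarith) (by linarith) (by positivity) (by positivity)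
          _ ≤ (1 + δ ^ 2) * (2 * (1 + h ^ 2) * (1 + x ^ 2)) := by
              apply mul_le_mul_of_nonneg_left _ (by positivity)
              nlinarith [sq_nonneg (x - h), sq_nonneg (x * h)]
          _ = 2 * (1 + δ ^ 2) * (1 + h ^ 2) * (1 + x ^ 2) := by ring
      exact mul_le_mul_of_nonneg_left hb hΩ0
    have hsum : |f (x + h) - f x| ≤
        (n : ℝ) * (OmegaW f δ * (2 * (1 + δ ^ 2) * (1 + h ^ 2) * (1 + x ^ 2))) := by
      rw [htel]
      refine (Finset.abs_sum_le_sum_abs _ _).trans ?_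
      calc ∑ k ∈ Finset.range n, |f (x + (k + 1 : ℕ) * h') - f (x + (k : ℕ) * h')|
          ≤ ∑ _k ∈ Finset.range n,
              OmegaW f δ * (2 * (1 + δ ^ 2) * (1 + h ^ 2) * (1 + x ^ 2)) :=
            Finset.sum_le_sum hterm
        _ = (n : ℝ) * (OmegaW f δ * (2 * (1 + δ ^ 2) * (1 + h ^ 2) * (1 + x ^ 2))) := by
            simp [Finset.sum_const, nsmul_eq_mul]
    have hden : (0:ℝ) < (1 + h ^ 2) * (1 + x ^ 2) := by positivity
    rw [div_le_iff₀ hden]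
    have hin : 0 ≤ OmegaW f δ * (2 * (1 + δ ^ 2) * (1 + h ^ 2) * (1 + x ^ 2)) :=
      mul_nonneg hΩ0 (by positivity)
    calc |f (x + h) - f x|
        ≤ (n : ℝ) * (OmegaW f δ * (2 * (1 + δ ^ 2) * (1 + h ^ 2) * (1 + x ^ 2))) := hsum
      _ ≤ (1 + lam) * (OmegaW f δ * (2 * (1 + δ ^ 2) * (1 + h ^ 2) * (1 + x ^ 2))) :=
          mul_le_mul_of_nonneg_right hnlam hin
      _ = 2 * (1 + lam) * (1 + δ ^ 2) * OmegaW f δ * ((1 + h ^ 2) * (1 + x ^ 2)) := by ring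
  · exact mul_nonneg (by positivity) hΩ0
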